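/- (Abstract form of Lemma 'tsr help 2'.) Let A, Z, C be seminormal crystals, let u ∈ A, z ∈ Z, and let j_1, …, j_m ∈ I. Suppose that F_{j_1}⋯F_{j_m}({u ⊗ z}) ⊆ {u} ⊗ Z inside A ⊗ Z. Then for every c ∈ C and all d_1, …, d_m ∈ ℤ_{≥0}, the monomial G = f_{j_1}^{d_1} ⋯ f_{j_m}^{d_m} satisfies G(u ⊗ (z ⊗ c)) = u ⊗ G(z ⊗ c) in the tensor product crystal A ⊗ (Z ⊗ C), with the convention u ⊗ 0 := 0. -/

import Mathlib

/-!
Common setup: seminormal crystals over an index type `I` and a weight group `P`,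
with simple roots `α : I → P` and coroot pairings `pair : I → P →+ ℤ`.
We model `B ⊔ {0}` as `Option B` with `0 = none`.
-/

/-- Iterate a partial map `g : B → Option B` (extended by `0 ↦ 0`) `n` times. -/
def optIter {B : Type*} (g : B → Option B) : ℕ → Option B → Option B
  | 0, x => x
  | n + 1, x => (optIter g n x).bind g

/-- A seminormal crystal: a set `B` with weight map `wt : B → P` and partial
crystal operators `e i, f i : B → Option B` (with the convention `0 ↦ 0`),
together with the (finite) string lengths `eps` and `phi`, satisfying the
seminormal crystal axioms. -/
structure SNCrystal (I : Type*) (P : Type*) [AddCommGroup P]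
    (α : I → P) (pair : I → P →+ ℤ) (B : Type*) where
  wt : B → P
  e : I → B → Option B
  f : I → B → Option B
  /-- `eps i b = max {k ≥ 0 ∣ e_i^k b ≠ 0}` (finiteness is the existence of this field). -/
  eps : I → B → ℕ
  /-- `phi i b = max {k ≥ 0 ∣ f_i^k b ≠ 0}` (finiteness is the existence of this field). -/
  phi : I → B → ℕ
  wt_e : ∀ i b b', e i b = some b' → wt b' = wt b + α i
  wt_f : ∀ i b b', f i b = some b' → wt b' = wt b - α i
  eps_spec : ∀ i b, optIter (e i) (eps i b) (some b) ≠ none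
  eps_max : ∀ i b, optIter (e i) (eps i b + 1) (some b) = none
  phi_spec : ∀ i b, optIter (f i) (phi i b) (some b) ≠ none
  phi_max : ∀ i b, optIter (f i) (phi i b + 1) (some b) = none
  pair_wt : ∀ i b, pair i (wt b) = (phi i b : ℤ) - (eps i b : ℤ)
  f_e : ∀ i b b', e i b = some b' → f i b' = some b
  e_f : ∀ i b b', f i b = some b' → e i b' = some b

/-- The raising operator of the tensor product crystal `B₁ ⊗ B₂`:
`e_i(b₁ ⊗ b₂) = e_i b₁ ⊗ b₂` if `φ_i(b₁) ≥ ε_i(b₂)`, else `b₁ ⊗ e_i b₂`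
(with `0 ⊗ b₂ = b₁ ⊗ 0 = 0`). -/
def tensorE {I P : Type*} [AddCommGroup P] {α : I → P} {pair : I → P →+ ℤ}
    {B1 B2 : Type*} (C1 : SNCrystal I P α pair B1) (C2 : SNCrystal I P α pair B2)
    (i : I) (b : B1 × B2) : Option (B1 × B2) :=
  if C2.eps i b.2 ≤ C1.phi i b.1 then (C1.e i b.1).map (fun x => (x, b.2))
  else (C2.e i b.2).map (fun x => (b.1, x))

/-- The lowering operator of the tensor product crystal `B₁ ⊗ B₂`:
`f_i(b₁ ⊗ b₂) = f_i b₁ ⊗ b₂` if `φ_i(b₁) > ε_i(b₂)`, else `b₁ ⊗ f_i b₂`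
(with `0 ⊗ b₂ = b₁ ⊗ 0 = 0`). -/
def tensorF {I P : Type*} [AddCommGroup P] {α : I → P} {pair : I → P →+ ℤ}
    {B1 B2 : Type*} (C1 : SNCrystal I P α pair B1) (C2 : SNCrystal I P α pair B2)
    (i : I) (b : B1 × B2) : Option (B1 × B2) :=
  if C2.eps i b.2 < C1.phi i b.1 then (C1.f i b.1).map (fun x => (x, b.2))
  else (C2.f i b.2).map (fun x => (b.1, x))

/-- `T` is the tensor product crystal `C1 ⊗ C2` on the set `B1 × B2`:
its weight map and crystal operators are given by the tensor product rule. -/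
def IsTensor {I P : Type*} [AddCommGroup P] {α : I → P} {pair : I → P →+ ℤ}
    {B1 B2 : Type*} (C1 : SNCrystal I P α pair B1) (C2 : SNCrystal I P α pair B2)
    (T : SNCrystal I P α pair (B1 × B2)) : Prop :=
  (∀ b : B1 × B2, T.wt b = C1.wt b.1 + C2.wt b.2) ∧
  (∀ (i : I) (b : B1 × B2), T.e i b = tensorE C1 C2 i b) ∧
  (∀ (i : I) (b : B1 × B2), T.f i b = tensorF C1 C2 i b)

/-- `F_i S = {f_i^k b ∣ b ∈ S, k ≥ 0} \ {0}`. -/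
def Fset {I P : Type*} [AddCommGroup P] {α : I → P} {pair : I → P →+ ℤ}
    {B : Type*} (C : SNCrystal I P α pair B) (i : I) (S : Set B) : Set B :=
  {b | ∃ s ∈ S, ∃ k : ℕ, optIter (C.f i) k (some s) = some b}

/-- `F_{j₁} ⋯ F_{j_m} S` for a word `[j₁, …, j_m]` (the rightmost letter acts first). -/
def Fword {I P : Type*} [AddCommGroup P] {α : I → P} {pair : I → P →+ ℤ}
    {B : Type*} (C : SNCrystal I P α pair B) (w : List I) (S : Set B) : Set B :=
  w.foldr (Fset C) S

/-- The monomial `f_{j₁}^{d₁} ⋯ f_{j_m}^{d_m}` applied to an element of `B ⊔ {0}`,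
given the list of pairs `[(j₁,d₁), …, (j_m,d_m)]` (the rightmost factor acts first). -/
def monomial {I P : Type*} [AddCommGroup P] {α : I → P} {pair : I → P →+ ℤ}
    {B : Type*} (C : SNCrystal I P α pair B) : List (I × ℕ) → Option B → Option B
  | [], x => x
  | p :: rest, x => optIter (C.f p.1) p.2 (monomial C rest x)

section Aux

theorem optIter_succ' {B : Type*} (g : B → Option B) (n : ℕ) (x : Option B) :
    optIter g (n+1) x = (optIter g n x).bind g := rfl

theorem optIter_none' {B : Type*} (g : B → Option B) : ∀ n, optIter g n none = none
  | 0 => rfl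
  | n+1 => by rw [optIter_succ', optIter_none' g n]; rfl

theorem optIter_add' {B : Type*} (g : B → Option B) (m : ℕ) :
    ∀ (n : ℕ) (x : Option B), optIter g (m + n) x = optIter g n (optIter g m x)
  | 0, x => rfl
  | n+1, x => by rw [← Nat.add_assoc, optIter_succ', optIter_add' g m n, optIter_succ']

theorem optIter_none_mono' {B : Type*} {g : B → Option B} {m n : ℕ} {x : Option B}
    (h : optIter g m x = none) (hmn : m ≤ n) : optIter g n x = none := by
  obtain ⟨k, rfl⟩ := Nat.exists_eq_add_of_le hmn
  rw [optIter_add', h, optIter_none']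

theorem g_ne_none' {B : Type*} {g : B → Option B} {n : ℕ} {b : B}
    (h : optIter g n (some b) ≠ none) (hn : 1 ≤ n) : g b ≠ none := by
  intro hg
  apply h
  apply optIter_none_mono' (m := 1) _ hn
  show (some b).bind g = none
  rw [Option.bind_some, hg]

theorem no_fix' {B : Type*} {g : B → Option B} {b : B} (h : g b = some b) :
    ∀ n, optIter g n (some b) = some b
  | 0 => rfl
  | n+1 => by rw [optIter_succ', no_fix' h n]; simpa

variable {I P : Type*} [AddCommGroup P] {α : I → P} {pair : I → P →+ ℤ}

theorem le_eps' {B : Type*} (C : SNCrystal I P α pair B) {i : I} {b : B} {k : ℕ}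
    (h : optIter (C.e i) k (some b) ≠ none) : k ≤ C.eps i b := by
  by_contra hk
  exact h (optIter_none_mono' (C.eps_max i b) (by omega))

theorem eps_pos_e' {B : Type*} (C : SNCrystal I P α pair B) {i : I} {b : B}
    (h : 1 ≤ C.eps i b) : C.e i b ≠ none := g_ne_none' (C.eps_spec i b) h

theorem phi_pos_f' {B : Type*} (C : SNCrystal I P α pair B) {i : I} {b : B}
    (h : 1 ≤ C.phi i b) : C.f i b ≠ none := g_ne_none' (C.phi_spec i b) h

theorem eps_e_succ' {B : Type*} (C : SNCrystal I P α pair B) {i : I} {b b' : B}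
    (h : C.e i b = some b') : C.eps i b = C.eps i b' + 1 := by
  have key : ∀ n, optIter (C.e i) (n+1) (some b) = optIter (C.e i) n (some b') := by
    intro n
    rw [Nat.add_comm, optIter_add']
    show optIter (C.e i) n ((some b).bind (C.e i)) = _
    rw [Option.bind_some, h]
  have h1 : C.eps i b' + 1 ≤ C.eps i b := le_eps' C (by rw [key]; exact C.eps_spec i b')
  have h2 : C.eps i b ≤ C.eps i b' + 1 := by
    by_contra hk
    apply C.eps_spec i b
    apply optIter_none_mono' (m := C.eps i b' + 1 + 1) _ (by omega)
    rw [key]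
    exact C.eps_max i b'
  omega

theorem eps_tensor_ge' {Z C : Type*} (CZ : SNCrystal I P α pair Z) (CC : SNCrystal I P α pair C)
    (TZC : SNCrystal I P α pair (Z × C)) (hTZC : IsTensor CZ CC TZC)
    (i : I) (a : Z) (b : C) : CZ.eps i a ≤ TZC.eps i (a, b) := by
  obtain ⟨-, he, -⟩ := hTZC
  suffices h : ∀ k, k ≤ CZ.eps i a → ∃ a' b', optIter (TZC.e i) k (some (a, b)) = some (a', b')
      ∧ CZ.eps i a ≤ CZ.eps i a' + k by
    obtain ⟨a', b', hk, -⟩ := h (CZ.eps i a) le_rfl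
    exact le_eps' TZC (by rw [hk]; simp)
  intro k hk
  induction k with
  | zero => exact ⟨a, b, rfl, by omega⟩
  | succ k ih =>
    obtain ⟨a', b', hit, hle⟩ := ih (by omega)
    have ha' : 1 ≤ CZ.eps i a' := by omega
    rw [optIter_succ', hit]
    rw [Option.bind_some, he]
    unfold tensorE
    by_cases hc : CC.eps i (a', b').2 ≤ CZ.phi i (a', b').1
    · obtain ⟨a'', ha''⟩ := Option.ne_none_iff_exists'.mp (eps_pos_e' CZ ha')
      refine ⟨a'', b', ?_, ?_⟩
      · rw [if_pos hc, ha'']; rfl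
      · have := eps_e_succ' CZ ha''; omega
    · have hb' : 1 ≤ CC.eps i b' := by simp only at hc; omega
      obtain ⟨b'', hb''⟩ := Option.ne_none_iff_exists'.mp (eps_pos_e' CC hb')
      refine ⟨a', b'', ?_, by omega⟩
      rw [if_neg hc, hb'']; rfl

theorem subset_Fset' {B : Type*} (C : SNCrystal I P α pair B) (i : I) (S : Set B) :
    S ⊆ Fset C i S := fun b hb => ⟨b, hb, 0, rfl⟩

theorem Fset_absorb' {B : Type*} (C : SNCrystal I P α pair B) {i : I} {S : Set B} {b b' : B}
    (hb : b ∈ Fset C i S) (h : C.f i b = some b') : b' ∈ Fset C i S := by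
  obtain ⟨s, hs, k, hk⟩ := hb
  exact ⟨s, hs, k+1, by rw [optIter_succ', hk, Option.bind_some, h]⟩

theorem key_eps' {A Z : Type*} (CA : SNCrystal I P α pair A) (CZ : SNCrystal I P α pair Z)
    (TAZ : SNCrystal I P α pair (A × Z)) (hTAZ : IsTensor CA CZ TAZ)
    {u : A} {j : I} {S : Set (A × Z)} (hcl : Fset TAZ j S ⊆ {p : A × Z | p.1 = u})
    {z : Z} (hm : (u, z) ∈ Fset TAZ j S) : CA.phi j u ≤ CZ.eps j z := by
  by_contra h
  have hphi : 1 ≤ CA.phi j u := by omega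
  obtain ⟨u', hu'⟩ := Option.ne_none_iff_exists'.mp (phi_pos_f' CA hphi)
  have hf : TAZ.f j (u, z) = some (u', z) := by
    rw [hTAZ.2.2]; unfold tensorF
    rw [if_pos (show CZ.eps j (u, z).2 < CA.phi j (u, z).1 by simp only; omega), hu']
    rfl
  have hmem : (u', z) ∈ Fset TAZ j S := Fset_absorb' TAZ hm hf
  have hu : u' = u := hcl hmem
  rw [hu] at hu'
  have hmax := CA.phi_max j u
  rw [no_fix' hu' (CA.phi j u + 1)] at hmax
  exact Option.some_ne_none u hmax

theorem stage' {A Z C : Type*} (CA : SNCrystal I P α pair A) (CZ : SNCrystal I P α pair Z)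
    (CC : SNCrystal I P α pair C)
    (TAZ : SNCrystal I P α pair (A × Z)) (hTAZ : IsTensor CA CZ TAZ)
    (TZC : SNCrystal I P α pair (Z × C)) (hTZC : IsTensor CZ CC TZC)
    (T : SNCrystal I P α pair (A × (Z × C))) (hT : IsTensor CA TZC T)
    {u : A} {j : I} {S : Set (A × Z)} (hcl : Fset TAZ j S ⊆ {p : A × Z | p.1 = u})
    (d : ℕ) (z : Z) (c : C) (hzS : (u, z) ∈ S) :
    optIter (T.f j) d (some (u, (z, c))) =
      (optIter (TZC.f j) d (some (z, c))).map (fun y => (u, y)) ∧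
    ∀ z'' c'', optIter (TZC.f j) d (some (z, c)) = some (z'', c'') →
      (u, z'') ∈ Fset TAZ j S := by
  induction d with
  | zero =>
    refine ⟨rfl, fun z'' c'' h => ?_⟩
    obtain ⟨rfl, -⟩ : z = z'' ∧ c = c'' := by simpa [optIter, Prod.ext_iff] using h
    exact subset_Fset' TAZ j S hzS
  | succ d ih =>
    obtain ⟨ihe, ihm⟩ := ih
    rw [optIter_succ', optIter_succ', ihe]
    cases hm : optIter (TZC.f j) d (some (z, c)) with
    | none => exact ⟨rfl, fun z'' c'' h => by simp at h⟩
    | some p =>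
      obtain ⟨z₂, c₂⟩ := p
      have hz₂ : (u, z₂) ∈ Fset TAZ j S := ihm z₂ c₂ hm
      have hkey : CA.phi j u ≤ CZ.eps j z₂ := key_eps' CA CZ TAZ hTAZ hcl hz₂
      have hkey2 : CA.phi j u ≤ TZC.eps j (z₂, c₂) :=
        le_trans hkey (eps_tensor_ge' CZ CC TZC hTZC j z₂ c₂)
      have hTf : T.f j (u, (z₂, c₂)) = (TZC.f j (z₂, c₂)).map (fun y => (u, y)) := by
        rw [hT.2.2]; unfold tensorF
        rw [if_neg (show ¬ TZC.eps j (u, (z₂, c₂)).2 < CA.phi j (u, (z₂, c₂)).1 by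
          simp only; omega)]
      constructor
      · rw [Option.map_some, Option.bind_some, Option.bind_some, hTf]
      · intro z₃ c₃ h3
        rw [Option.bind_some] at h3
        rw [hTZC.2.2] at h3; unfold tensorF at h3
        by_cases hc : CC.eps j (z₂, c₂).2 < CZ.phi j (z₂, c₂).1
        · rw [if_pos hc] at h3
          obtain ⟨z₃', hz₃', heq⟩ := Option.map_eq_some_iff.mp h3
          obtain ⟨rfl, -⟩ : z₃' = z₃ ∧ c₂ = c₃ := by simpa [Prod.ext_iff] using heq
          refine Fset_absorb' TAZ hz₂ ?_
          rw [hTAZ.2.2]; unfold tensorF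
          rw [if_neg (show ¬ CZ.eps j (u, z₂).2 < CA.phi j (u, z₂).1 by simp only; omega)]
          rw [hz₃']; rfl
        · rw [if_neg hc] at h3
          obtain ⟨c₃', hc₃', heq⟩ := Option.map_eq_some_iff.mp h3
          obtain ⟨rfl, -⟩ : z₂ = z₃ ∧ c₃' = c₃ := by simpa [Prod.ext_iff] using heq
          exact hz₂

theorem tsr_help_aux' {A Z C : Type*} (CA : SNCrystal I P α pair A) (CZ : SNCrystal I P α pair Z)
    (CC : SNCrystal I P α pair C)
    (TAZ : SNCrystal I P α pair (A × Z)) (hTAZ : IsTensor CA CZ TAZ)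
    (TZC : SNCrystal I P α pair (Z × C)) (hTZC : IsTensor CZ CC TZC)
    (T : SNCrystal I P α pair (A × (Z × C))) (hT : IsTensor CA TZC T)
    (u : A) (z : Z) (js : List I) :
    ∀ (_ : Fword TAZ js {(u, z)} ⊆ {p : A × Z | p.1 = u}) (c : C) (ds : List ℕ),
      ds.length = js.length →
      (monomial T (js.zip ds) (some (u, (z, c))) =
        (monomial TZC (js.zip ds) (some (z, c))).map (fun y => (u, y)) ∧
      ∀ z' c', monomial TZC (js.zip ds) (some (z, c)) = some (z', c') →
        (u, z') ∈ Fword TAZ js {(u, z)}) := by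
  induction js with
  | nil =>
    intro hF c ds hlen
    refine ⟨rfl, fun z' c' h => ?_⟩
    obtain ⟨rfl, -⟩ : z = z' ∧ c = c' := by simpa [Prod.ext_iff, monomial] using h
    exact rfl
  | cons j rest ih =>
    intro hF c ds hlen
    match ds with
    | [] => simp at hlen
    | d :: ds' =>
      have hlen' : ds'.length = rest.length := by simpa using hlen
      have hFrest : Fword TAZ rest {(u, z)} ⊆ {p : A × Z | p.1 = u} :=
        fun p hp => hF (subset_Fset' TAZ j _ hp)
      obtain ⟨ihe, ihm⟩ := ih hFrest c ds' hlen'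
      have hFcl : Fset TAZ j (Fword TAZ rest {(u, z)}) ⊆ {p : A × Z | p.1 = u} := hF
      show optIter (T.f j) d (monomial T (rest.zip ds') (some (u, (z, c)))) =
          (optIter (TZC.f j) d (monomial TZC (rest.zip ds') (some (z, c)))).map
            (fun y => (u, y)) ∧ _
      rw [ihe]
      cases hm : monomial TZC (rest.zip ds') (some (z, c)) with
      | none =>
        refine ⟨by rw [Option.map_none, optIter_none', optIter_none', Option.map_none],
          fun z' c' h => ?_⟩
        have h' : optIter (TZC.f j) d (monomial TZC (rest.zip ds') (some (z, c)))
            = some (z', c') := h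
        rw [hm, optIter_none'] at h'
        simp at h'
      | some p =>
        obtain ⟨z', c'⟩ := p
        have hz' : (u, z') ∈ Fword TAZ rest {(u, z)} := ihm z' c' hm
        obtain ⟨hs1, hs2⟩ := stage' CA CZ CC TAZ hTAZ TZC hTZC T hT hFcl d z' c' hz'
        refine ⟨hs1, fun z₂ c₂ h => ?_⟩
        have h' : optIter (TZC.f j) d (monomial TZC (rest.zip ds') (some (z, c)))
            = some (z₂, c₂) := h
        rw [hm] at h'
        exact hs2 z₂ c₂ h'

end Aux

/-- abstract form of Lemma "tsr help 2". Let `A`, `Z`, `C` be seminormal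
crystals, `u ∈ A`, `z ∈ Z`, and `j₁, …, j_m ∈ I`. If `F_{j₁}⋯F_{j_m}({u ⊗ z}) ⊆ {u} ⊗ Z`
in `A ⊗ Z`, then for every `c ∈ C` and all `d₁, …, d_m ≥ 0`, the monomial
`G = f_{j₁}^{d₁}⋯f_{j_m}^{d_m}` satisfies `G(u ⊗ (z ⊗ c)) = u ⊗ G(z ⊗ c)` in
`A ⊗ (Z ⊗ C)` (with the convention `u ⊗ 0 = 0`). -/
theorem tsr_help_two {I P : Type*} [AddCommGroup P] {α : I → P} {pair : I → P →+ ℤ}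
    {A Z C : Type*} (CA : SNCrystal I P α pair A) (CZ : SNCrystal I P α pair Z)
    (CC : SNCrystal I P α pair C)
    (TAZ : SNCrystal I P α pair (A × Z)) (hTAZ : IsTensor CA CZ TAZ)
    (TZC : SNCrystal I P α pair (Z × C)) (hTZC : IsTensor CZ CC TZC)
    (T : SNCrystal I P α pair (A × (Z × C))) (hT : IsTensor CA TZC T)
    (u : A) (z : Z) (js : List I)
    (hF : Fword TAZ js {(u, z)} ⊆ {p : A × Z | p.1 = u}) :
    ∀ (c : C) (ds : List ℕ), ds.length = js.length →
      monomial T (js.zip ds) (some (u, (z, c))) =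
        (monomial TZC (js.zip ds) (some (z, c))).map (fun y => (u, y)) := by
  intro c ds hlen
  exact (tsr_help_aux' CA CZ CC TAZ hTAZ TZC hTZC T hT u z js hF c ds hlen).1
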